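/- For any positive integers m and n with m ≤ 2n, the sum D^{(m)}_n := ∑_{j=-n}^{n} |d^{(m)}_{n,j}| of the absolute values of the central difference coefficients satisfies D^{(m)}_n ≤ 2m·(2(1 + log n))^m. -/

import Mathlib

open Finset

/-- binomial-type inequality -/
lemma binom_aux (a b : ℝ) (k : ℕ) (ha : 0 ≤ a) (hb : 0 ≤ b) :
    b ^ (k+1) + (k+1 : ℝ) * a * b ^ k ≤ (a + b) ^ (k+1) := by
  induction k with
  | zero => simp; nlinarith
  | succ k ih =>
    have hbk : 0 ≤ b ^ k := pow_nonneg hb k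
    rw [pow_succ b k] at ih
    rw [pow_succ (a+b) (k+1), pow_succ b (k+1), pow_succ b k]
    push_cast
    nlinarith [mul_le_mul_of_nonneg_right ih (show (0:ℝ) ≤ a+b by linarith),
      mul_nonneg (mul_nonneg ha ha) hbk]

lemma factorial_mul_esymm_le {ι : Type*} [DecidableEq ι] (s : Finset ι) (f : ι → ℝ)
    (hf : ∀ i ∈ s, 0 ≤ f i) :
    ∀ k : ℕ, (k.factorial : ℝ) * ∑ T ∈ Finset.powersetCard k s, ∏ l ∈ T, f l
      ≤ (∑ l ∈ s, f l) ^ k := by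
  induction s using Finset.induction_on with
  | empty =>
    intro k
    cases k with
    | zero => simp
    | succ k =>
      rw [Finset.powersetCard_eq_empty.mpr (by simp)]
      simp
  | @insert x s hx ih =>
    have hfs : ∀ i ∈ s, 0 ≤ f i := fun i hi => hf i (mem_insert_of_mem hi)
    have hfx : 0 ≤ f x := hf x (mem_insert_self x s)
    have hS : 0 ≤ ∑ l ∈ s, f l := Finset.sum_nonneg hfs
    intro k
    cases k with
    | zero => simp
    | succ k =>
      rw [Finset.powersetCard_succ_insert hx]
      have hdisj : Disjoint (powersetCard (k+1) s) ((powersetCard k s).image (insert x)) := by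
        rw [Finset.disjoint_left]
        intro T hT hT'
        obtain ⟨U, hU, rfl⟩ := Finset.mem_image.mp hT'
        have := (Finset.mem_powersetCard.mp hT).1 (Finset.mem_insert_self x U)
        exact hx this
      rw [Finset.sum_union hdisj]
      have himg : ∑ T ∈ (powersetCard k s).image (insert x), ∏ l ∈ T, f l
          = f x * ∑ T ∈ powersetCard k s, ∏ l ∈ T, f l := by
        rw [Finset.sum_image, Finset.mul_sum]
        · apply Finset.sum_congr rfl
          intro T hT
          have hxT : x ∉ T := fun h => hx ((Finset.mem_powersetCard.mp hT).1 h)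
          rw [Finset.prod_insert hxT]
        · intro T hT U hU hTU
          have hxT : x ∉ T := fun h => hx ((Finset.mem_powersetCard.mp hT).1 h)
          have hxU : x ∉ U := fun h => hx ((Finset.mem_powersetCard.mp hU).1 h)
          have := congrArg (Finset.erase · x) hTU
          simpa [Finset.erase_insert hxT, Finset.erase_insert hxU] using this
      rw [himg, Finset.sum_insert hx]
      have h1 := ih hfs (k+1)
      have h2 := ih hfs k
      have hb := binom_aux (f x) (∑ l ∈ s, f l) k hfx hS
      have hcast : ((k+1).factorial : ℝ) = (k+1) * (k.factorial : ℝ) := by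
        push_cast [Nat.factorial_succ]; ring
      have hE : 0 ≤ ∑ T ∈ powersetCard k s, ∏ l ∈ T, f l := by
        apply Finset.sum_nonneg
        intro T hT
        exact Finset.prod_nonneg fun l hl => hfs l ((Finset.mem_powersetCard.mp hT).1 hl)
      have hk0 : (0:ℝ) ≤ k+1 := by positivity
      rw [hcast] at h1 ⊢
      nlinarith [mul_le_mul_of_nonneg_left h2 (mul_nonneg hk0 hfx)]

/-- The symmetric index set `[-n,n] \ {0}`. -/
noncomputable def Sset (n : ℕ) : Finset ℤ := (Finset.Icc (-(n : ℤ)) n).erase 0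

lemma Sset_succ (n : ℕ) :
    Sset (n+1) = insert ((n:ℤ)+1) (insert (-(n:ℤ)-1) (Sset n)) := by
  ext a
  simp only [Sset, Finset.mem_erase, Finset.mem_Icc, Finset.mem_insert]
  push_cast
  omega

lemma card_Sset (n : ℕ) : (Sset n).card = 2 * n := by
  rw [Sset, Finset.card_erase_of_mem (by simp [Finset.mem_Icc]), Int.card_Icc]
  omega

lemma prod_abs_Sset (n : ℕ) : ∏ l ∈ Sset n, |(l:ℝ)| = (n.factorial : ℝ)^2 := by
  induction n with
  | zero =>
    have : Sset 0 = ∅ := by decide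
    simp [this]
  | succ n ih =>
    have h1 : ((n:ℤ)+1) ∉ insert (-(n:ℤ)-1) (Sset n) := by
      simp only [Finset.mem_insert, Sset, Finset.mem_erase, Finset.mem_Icc]
      omega
    have h2 : (-(n:ℤ)-1) ∉ Sset n := by
      simp only [Sset, Finset.mem_erase, Finset.mem_Icc]
      omega
    rw [Sset_succ, Finset.prod_insert h1, Finset.prod_insert h2, ih]
    have e1 : |(((n:ℤ)+1 : ℤ) : ℝ)| = (n:ℝ)+1 := by
      push_cast; rw [abs_of_nonneg]; positivity
    have e2 : |((-(n:ℤ)-1 : ℤ) : ℝ)| = (n:ℝ)+1 := by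
      push_cast; rw [abs_of_nonpos (by linarith [Nat.cast_nonneg (α := ℝ) n])]; ring
    rw [e1, e2]
    push_cast [Nat.factorial_succ]
    ring

lemma sum_inv_abs_Sset (n : ℕ) :
    ∑ l ∈ Sset n, |(l:ℝ)|⁻¹ = 2 * (harmonic n : ℝ) := by
  induction n with
  | zero =>
    have : Sset 0 = ∅ := by decide
    simp [this, harmonic]
  | succ n ih =>
    have h1 : ((n:ℤ)+1) ∉ insert (-(n:ℤ)-1) (Sset n) := by
      simp only [Finset.mem_insert, Sset, Finset.mem_erase, Finset.mem_Icc]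
      omega
    have h2 : (-(n:ℤ)-1) ∉ Sset n := by
      simp only [Sset, Finset.mem_erase, Finset.mem_Icc]
      omega
    rw [Sset_succ, Finset.sum_insert h1, Finset.sum_insert h2, ih]
    have e1 : |(((n:ℤ)+1 : ℤ) : ℝ)| = (n:ℝ)+1 := by
      push_cast; rw [abs_of_nonneg]; positivity
    have e2 : |((-(n:ℤ)-1 : ℤ) : ℝ)| = (n:ℝ)+1 := by
      push_cast; rw [abs_of_nonpos (by linarith [Nat.cast_nonneg (α := ℝ) n])]; ring
    rw [e1, e2, harmonic_succ]
    push_cast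
    ring

lemma sum_inv_abs_Sset_le (n : ℕ) :
    ∑ l ∈ Sset n, |(l:ℝ)|⁻¹ ≤ 2 * (1 + Real.log n) := by
  rw [sum_inv_abs_Sset]
  have := harmonic_le_one_add_log n
  linarith

lemma factorial_sq_le (n : ℕ) (j : ℤ) (h1 : -(n:ℤ) ≤ j) (h2 : j ≤ n) :
    n.factorial * n.factorial ≤ (n+j).toNat.factorial * (n-j).toNat.factorial := by
  set a := ((n:ℤ)+j).toNat with ha
  have haa : a ≤ 2*n := by omega
  have hb : ((n:ℤ)-j).toNat = 2*n - a := by omega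
  rw [hb]
  have h1' := Nat.choose_le_middle a (2*n)
  have e1 : Nat.choose (2*n) a * a.factorial * (2*n - a).factorial = (2*n).factorial :=
    Nat.choose_mul_factorial_mul_factorial haa
  have e2 : Nat.choose (2*n) n * n.factorial * (n).factorial = (2*n).factorial := by
    have := Nat.choose_mul_factorial_mul_factorial (show n ≤ 2*n by omega)
    simpa [show 2*n - n = n by omega] using this
  have hmid : (2*n)/2 = n := by omega
  rw [hmid] at h1'
  have hpos : 0 < Nat.choose (2*n) n := Nat.choose_pos (by omega)
  -- choose(2n,n) * (n! * n!) = choose(2n,a) * (a! * (2n-a)!) ≤ choose(2n,n) * (a!*(2n-a)!)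
  have key : Nat.choose (2*n) n * (n.factorial * n.factorial)
      ≤ Nat.choose (2*n) n * (a.factorial * (2*n-a).factorial) := by
    calc Nat.choose (2*n) n * (n.factorial * n.factorial)
        = (2*n).factorial := by rw [← e2]; ring
      _ = Nat.choose (2*n) a * (a.factorial * (2*n-a).factorial) := by rw [← e1]; ring
      _ ≤ Nat.choose (2*n) n * (a.factorial * (2*n-a).factorial) :=
          Nat.mul_le_mul_right _ h1'
  exact Nat.le_of_mul_le_mul_left key hpos

lemma sum_powersetCard_compl {u : Finset ℤ} {k : ℕ} (hk : k ≤ u.card) (g : ℤ → ℝ) :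
    ∑ T ∈ Finset.powersetCard k u, ∏ l ∈ T, g l
      = ∑ R ∈ Finset.powersetCard (u.card - k) u, ∏ l ∈ u \ R, g l := by
  refine Finset.sum_nbij' (fun T => u \ T) (fun R => u \ R) ?_ ?_ ?_ ?_ ?_
  · intro T hT
    obtain ⟨hsub, hcard⟩ := Finset.mem_powersetCard.mp hT
    exact Finset.mem_powersetCard.mpr ⟨Finset.sdiff_subset, by rw [Finset.card_sdiff_of_subset hsub, hcard]⟩
  · intro R hR
    obtain ⟨hsub, hcard⟩ := Finset.mem_powersetCard.mp hR
    refine Finset.mem_powersetCard.mpr ⟨Finset.sdiff_subset, ?_⟩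
    rw [Finset.card_sdiff_of_subset hsub, hcard]
    omega
  · intro T hT
    exact Finset.sdiff_sdiff_eq_self (Finset.mem_powersetCard.mp hT).1
  · intro R hR
    exact Finset.sdiff_sdiff_eq_self (Finset.mem_powersetCard.mp hR).1
  · intro T hT
    rw [Finset.sdiff_sdiff_eq_self (Finset.mem_powersetCard.mp hT).1]

/-- The general-order central difference coefficient `d^{(m)}_{n,j}`. -/
noncomputable def centralDiffCoef (m n : ℕ) (j : ℤ) : ℝ :=
  if j = 0 then
    -∑ i ∈ (Finset.Icc (-(n : ℤ)) n).erase 0,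
      (-1 : ℝ) ^ ((m : ℤ) - i) * (m.factorial : ℝ) *
        (∑ T ∈ Finset.powersetCard (2 * n - m)
            (((Finset.Icc (-(n : ℤ)) n).erase 0).erase i), ∏ l ∈ T, (l : ℝ)) /
        (((n + i).toNat.factorial : ℝ) * ((n - i).toNat.factorial : ℝ))
  else
    (-1 : ℝ) ^ ((m : ℤ) - j) * (m.factorial : ℝ) *
      (∑ T ∈ Finset.powersetCard (2 * n - m)
          (((Finset.Icc (-(n : ℤ)) n).erase 0).erase j), ∏ l ∈ T, (l : ℝ)) /
      (((n + j).toNat.factorial : ℝ) * ((n - j).toNat.factorial : ℝ))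

set_option maxHeartbeats 1600000 in
lemma coef_bound (m n : ℕ) (hm : 1 ≤ m) (hn : 1 ≤ n) (hmn : m ≤ 2*n) (j : ℤ)
    (hj : j ∈ Sset n) :
    |centralDiffCoef m n j| ≤ (m : ℝ) * |(j:ℝ)|⁻¹ * (2*(1+Real.log n))^(m-1) := by
  have hj0 : j ≠ 0 := (Finset.mem_erase.mp hj).1
  obtain ⟨hjn1, hjn2⟩ := Finset.mem_Icc.mp (Finset.mem_erase.mp hj).2
  have hjR : |(j:ℝ)| ≠ 0 := by
    simp only [ne_eq, abs_eq_zero, Int.cast_eq_zero]; exact hj0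
  set u : Finset ℤ := ((Finset.Icc (-(n : ℤ)) n).erase 0).erase j with hu
  have huS : u = (Sset n).erase j := rfl
  have hcard_u : u.card = 2*n - 1 := by
    rw [huS, Finset.card_erase_of_mem hj, card_Sset]
  have hmem_ne : ∀ l ∈ u, (l:ℤ) ≠ 0 := by
    intro l hl
    exact (Finset.mem_erase.mp (Finset.mem_of_mem_erase (huS ▸ hl))).1
  have habs_pos : ∀ l ∈ u, (0:ℝ) < |(l:ℝ)| := by
    intro l hl
    have : (l:ℝ) ≠ 0 := Int.cast_ne_zero.mpr (hmem_ne l hl)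
    positivity
  set H : ℝ := 2*(1+Real.log n) with hH
  have hH0 : 0 ≤ H := by
    have : (0:ℝ) ≤ Real.log n := Real.log_nonneg (by exact_mod_cast hn)
    rw [hH]; linarith
  set A : ℝ := ∑ T ∈ Finset.powersetCard (2*n-m) u, ∏ l ∈ T, (l:ℝ) with hA
  set B : ℝ := ∑ T ∈ Finset.powersetCard (2*n-m) u, ∏ l ∈ T, |(l:ℝ)| with hB
  have hB0 : 0 ≤ B := by
    apply Finset.sum_nonneg
    intro T hT
    exact Finset.prod_nonneg fun l hl => abs_nonneg _
  have hAB : |A| ≤ B := by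
    rw [hA, hB]
    refine (Finset.abs_sum_le_sum_abs _ _).trans (le_of_eq ?_)
    exact Finset.sum_congr rfl fun T _ => Finset.abs_prod _ _
  have hkle : 2*n - m ≤ u.card := by omega
  have hidx : u.card - (2*n-m) = m - 1 := by omega
  set Pu : ℝ := ∏ l ∈ u, |(l:ℝ)| with hPu
  have hPu0 : 0 < Pu := Finset.prod_pos habs_pos
  have hPuval : |(j:ℝ)| * Pu = (n.factorial : ℝ)^2 := by
    rw [hPu, huS]
    rw [Finset.mul_prod_erase (Sset n) (fun l => |(l:ℝ)|) hj]
    exact prod_abs_Sset n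
  set C : ℝ := ∑ R ∈ Finset.powersetCard (m-1) u, ∏ l ∈ R, |(l:ℝ)|⁻¹ with hC
  have hBC : B = Pu * C := by
    rw [hB, sum_powersetCard_compl hkle, hidx, hC, Finset.mul_sum]
    refine Finset.sum_congr rfl fun R hR => ?_
    have hsub : R ⊆ u := (Finset.mem_powersetCard.mp hR).1
    have hprod : (∏ l ∈ u \ R, |(l:ℝ)|) * ∏ l ∈ R, |(l:ℝ)| = Pu :=
      Finset.prod_sdiff hsub
    have hRpos : 0 < ∏ l ∈ R, |(l:ℝ)| :=
      Finset.prod_pos fun l hl => habs_pos l (hsub hl)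
    rw [Finset.prod_inv_distrib, eq_mul_inv_iff_mul_eq₀ hRpos.ne']
    exact hprod
  have hCle : ((m-1).factorial : ℝ) * C ≤ H ^ (m-1) := by
    refine le_trans (factorial_mul_esymm_le u (fun l => |(l:ℝ)|⁻¹)
      (fun l hl => le_of_lt (inv_pos.mpr (habs_pos l hl))) (m-1)) ?_
    have hsum : ∑ l ∈ u, |(l:ℝ)|⁻¹ ≤ H := by
      refine le_trans ?_ (sum_inv_abs_Sset_le n)
      rw [huS]
      refine Finset.sum_le_sum_of_subset_of_nonneg (Finset.erase_subset _ _) ?_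
      intro l hl _
      positivity
    refine pow_le_pow_left₀ ?_ hsum _
    apply Finset.sum_nonneg
    intro l hl
    positivity
  have hC0 : 0 ≤ C := by
    apply Finset.sum_nonneg
    intro R hR
    exact Finset.prod_nonneg fun l hl =>
      le_of_lt (inv_pos.mpr (habs_pos l ((Finset.mem_powersetCard.mp hR).1 hl)))
  set D : ℝ := ((n + j).toNat.factorial : ℝ) * ((n - j).toNat.factorial : ℝ) with hD
  have hDpos : 0 < D := by positivity
  have hKD : ((n.factorial : ℝ))^2 ≤ D := by
    rw [hD]
    have := factorial_sq_le n j hjn1 hjn2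
    have h := Nat.cast_le (α := ℝ).mpr this
    push_cast at h ⊢
    nlinarith [h]
  have h1 : |(-1:ℝ) ^ ((m:ℤ) - j)| = 1 := by
    rw [show |(-1:ℝ)^((m:ℤ)-j)| = |(-1:ℝ)|^((m:ℤ)-j) from map_zpow₀ absHom _ _,
      abs_neg, abs_one, one_zpow]
  have hcoef : |centralDiffCoef m n j| = (m.factorial : ℝ) * |A| / D := by
    rw [centralDiffCoef, if_neg hj0, ← hu, ← hA, ← hD]
    rw [abs_div, abs_mul, abs_mul, h1, one_mul, Nat.abs_cast, abs_of_pos hDpos]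
  rw [hcoef]
  have hNsq : (0:ℝ) < (n.factorial : ℝ)^2 := by positivity
  have step1 : (m.factorial : ℝ) * |A| / D ≤ (m.factorial : ℝ) * B / (n.factorial : ℝ)^2 := by
    apply div_le_div₀ (by positivity) ?_ hNsq hKD
    exact mul_le_mul_of_nonneg_left hAB (by positivity)
  refine step1.trans ?_
  have hfacm1 : (0:ℝ) < ((m-1).factorial : ℝ) := by positivity
  have step2 : (m.factorial : ℝ) * B / (n.factorial : ℝ)^2
      ≤ (m.factorial : ℝ) * (Pu * (H^(m-1) / ((m-1).factorial : ℝ))) / (n.factorial : ℝ)^2 := by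
    rw [hBC]
    gcongr
    rw [le_div_iff₀ hfacm1]
    linarith [hCle]
  refine step2.trans (le_of_eq ?_)
  have hmfac : (m.factorial : ℝ) = (m : ℝ) * ((m-1).factorial : ℝ) := by
    rw [← Nat.mul_factorial_pred (by omega : m ≠ 0)]
    push_cast
    ring
  have hPuval' : Pu = (n.factorial : ℝ)^2 / |(j:ℝ)| := by
    field_simp
    linarith [hPuval]
  rw [hmfac, hPuval']
  have hN0 : (n.factorial : ℝ) ≠ 0 := by positivity
  field_simp

theorem sum_abs_centralDiffCoef_le (m n : ℕ) (hm : 1 ≤ m) (hn : 1 ≤ n)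
    (hmn : m ≤ 2 * n) :
    ∑ j ∈ Finset.Icc (-(n : ℤ)) n, |centralDiffCoef m n j|
      ≤ 2 * m * (2 * (1 + Real.log n)) ^ m := by
  set H : ℝ := 2*(1+Real.log n) with hH
  have hH0 : 0 ≤ H := by
    have : (0:ℝ) ≤ Real.log n := Real.log_nonneg (by exact_mod_cast hn)
    rw [hH]; linarith
  have h0mem : (0:ℤ) ∈ Finset.Icc (-(n:ℤ)) n := by
    simp only [Finset.mem_Icc]
    omega
  have hsplit : ∑ j ∈ Finset.Icc (-(n:ℤ)) n, |centralDiffCoef m n j|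
      = |centralDiffCoef m n 0| + ∑ j ∈ Sset n, |centralDiffCoef m n j| := by
    rw [← Finset.add_sum_erase _ _ h0mem]
    rfl
  have hcoef0 : centralDiffCoef m n 0 = -∑ i ∈ Sset n, centralDiffCoef m n i := by
    rw [centralDiffCoef, if_pos rfl]
    congr 1
    refine Finset.sum_congr rfl fun i hi => ?_
    have hi0 : i ≠ 0 := (Finset.mem_erase.mp hi).1
    rw [centralDiffCoef, if_neg hi0]
  have h0le : |centralDiffCoef m n 0| ≤ ∑ j ∈ Sset n, |centralDiffCoef m n j| := by
    rw [hcoef0, abs_neg]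
    exact Finset.abs_sum_le_sum_abs _ _
  have hsumS : ∑ j ∈ Sset n, |centralDiffCoef m n j| ≤ (m:ℝ) * H ^ m := by
    calc ∑ j ∈ Sset n, |centralDiffCoef m n j|
        ≤ ∑ j ∈ Sset n, (m:ℝ) * |(j:ℝ)|⁻¹ * H^(m-1) :=
          Finset.sum_le_sum fun j hj => coef_bound m n hm hn hmn j hj
      _ = (m:ℝ) * H^(m-1) * ∑ j ∈ Sset n, |(j:ℝ)|⁻¹ := by
          rw [Finset.mul_sum]
          exact Finset.sum_congr rfl fun j _ => by ring
      _ ≤ (m:ℝ) * H^(m-1) * H :=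
          mul_le_mul_of_nonneg_left (sum_inv_abs_Sset_le n) (by positivity)
      _ = (m:ℝ) * H^m := by
          rw [mul_assoc, ← pow_succ, Nat.sub_add_cancel hm]
  rw [hsplit]
  have h2 : (2:ℝ) * m * H^m = (m:ℝ)*H^m + (m:ℝ)*H^m := by ring
  linarith [h0le, hsumS]
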